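/- For every natural number n ≥ 1, (n + 1/2)·log n − n + (1/2)·log(2π) < log(n!) < (n + 1/2)·log n − n + (1/2)·log(2π) + 1/12. -/

import Mathlib

open Nat Finset Filter Real Stirling
open scoped Topology

noncomputable section

private lemma robbins_geo (n : ℕ) :
    HasSum (fun k : ℕ => (1:ℝ)/3 * (((1:ℝ) / (2 * ↑(n + 1) + 1)) ^ 2) ^ (k+1))
      ((1:ℝ)/3 * ((((1:ℝ) / (2 * ↑(n + 1) + 1)) ^ 2) /
        (1 - ((1:ℝ) / (2 * ↑(n + 1) + 1)) ^ 2))) := by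
  have h_nonneg : (0 : ℝ) ≤ ((1 : ℝ) / (2 * ↑(n + 1) + 1)) ^ 2 := sq_nonneg _
  have ht : ((1 : ℝ) / (2 * ↑(n + 1) + 1)) ^ 2 < 1 := by
    rw [one_div, inv_pow]
    exact inv_lt_one_of_one_lt₀ (one_lt_pow₀ (lt_add_of_pos_left _ <| by positivity) two_ne_zero)
  have := ((hasSum_geometric_of_lt_one h_nonneg ht).mul_left
    (((1 : ℝ) / (2 * ↑(n + 1) + 1)) ^ 2)).mul_left ((1:ℝ)/3)
  simp_rw [← _root_.pow_succ'] at this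
  exact this

private lemma robbins_diff_lt (n : ℕ) :
    Real.log (stirlingSeq (n+1)) - Real.log (stirlingSeq (n+2)) <
      1/(12*((n:ℝ)+1)) - 1/(12*((n:ℝ)+2)) := by
  have h_pos : (0 : ℝ) < ((1 : ℝ) / (2 * ↑(n + 1) + 1)) ^ 2 := by positivity
  have key : Real.log (stirlingSeq (n+1)) - Real.log (stirlingSeq (n+2)) <
      (1:ℝ)/3 * ((((1:ℝ) / (2 * ↑(n + 1) + 1)) ^ 2) /
        (1 - ((1:ℝ) / (2 * ↑(n + 1) + 1)) ^ 2)) := by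
    refine hasSum_lt (i := 1) ?_ ?_ (log_stirlingSeq_diff_hasSum n) (robbins_geo n)
    · intro k
      refine mul_le_mul_of_nonneg_right ?_ (by positivity)
      rw [div_le_div_iff₀ (by positivity) (by norm_num)]
      push_cast
      linarith [Nat.cast_nonneg (α := ℝ) k]
    · refine mul_lt_mul_of_pos_right ?_ (by positivity)
      norm_num
  refine key.trans_le (le_of_eq ?_)
  have h1 : (2 * (↑(n+1) : ℝ) + 1) ≠ 0 := by positivity
  have h2 : ((n:ℝ)+1) ≠ 0 := by positivity
  have h3 : ((n:ℝ)+2) ≠ 0 := by positivity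
  have h4 : (1 : ℝ) - ((1 : ℝ) / (2 * ↑(n + 1) + 1)) ^ 2 ≠ 0 := by
    have : ((1 : ℝ) / (2 * ↑(n + 1) + 1)) ^ 2 < 1 := by
      rw [one_div, inv_pow]
      exact inv_lt_one_of_one_lt₀ (one_lt_pow₀ (lt_add_of_pos_left _ <| by positivity) two_ne_zero)
    linarith
  have h5 : ((n:ℝ)^2*12 + (n:ℝ)*36 + 24) ≠ 0 := by positivity
  have h6 : (2 * ((n:ℝ)+1) + 1) ^ 2 - 1 ≠ 0 := by
    have hn0 : (0:ℝ) ≤ n := n.cast_nonneg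
    nlinarith
  have h7 : (2 * ((n:ℝ)+1) + 1) ≠ 0 := by positivity
  push_cast
  rw [div_pow, one_pow, one_sub_div (pow_ne_zero 2 h7), div_div_div_cancel_right₀ (pow_ne_zero 2 h7)]
  field_simp
  ring

private lemma robbins_diff_pos (n : ℕ) :
    0 < Real.log (stirlingSeq (n+1)) - Real.log (stirlingSeq (n+2)) := by
  have h := le_hasSum (log_stirlingSeq_diff_hasSum n) 0 (fun j _ => by positivity)
  refine lt_of_lt_of_le ?_ h
  positivity

private lemma log_stirling_tendsto :
    Tendsto (fun k : ℕ => Real.log (stirlingSeq (k+1))) atTop (𝓝 (Real.log (√π))) := by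
  have h : Tendsto (fun k : ℕ => stirlingSeq (k+1)) atTop (𝓝 (√π)) :=
    tendsto_stirlingSeq_sqrt_pi.comp (tendsto_add_atTop_nat 1)
  exact h.log (by positivity)

private lemma robbins_lower (n : ℕ) : Real.log (√π) < Real.log (stirlingSeq (n+1)) := by
  have h1 : Real.log (√π) ≤ Real.log (stirlingSeq (n+2)) := by
    have anti : Antitone (fun k : ℕ => Real.log (stirlingSeq (k+1))) := by
      intro a b hab
      exact log_stirlingSeq'_antitone hab
    simpa using anti.le_of_tendsto log_stirling_tendsto (n+1)
  linarith [robbins_diff_pos n]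

private lemma robbins_upper_tail (m : ℕ) :
    Real.log (stirlingSeq (m+1)) ≤ Real.log (√π) + 1/(12*((m:ℝ)+1)) := by
  set e : ℕ → ℝ := fun k => Real.log (stirlingSeq (k+1)) - 1/(12*((k:ℝ)+1)) with he
  have hmono : Monotone e := by
    refine monotone_nat_of_le_succ fun k => ?_
    have h := robbins_diff_lt k
    simp only [he]
    push_cast
    ring_nf
    ring_nf at h
    linarith
  have hlim : Tendsto e atTop (𝓝 (Real.log (√π))) := by
    have h2 : Tendsto (fun k : ℕ => 1/(12*((k:ℝ)+1))) atTop (𝓝 0) := by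
      have h := Tendsto.const_mul (1/12 : ℝ) tendsto_one_div_add_atTop_nhds_zero_nat
      rw [mul_zero] at h
      refine h.congr fun k => ?_
      have hk : ((k:ℝ)+1) ≠ 0 := by positivity
      field_simp
    have := log_stirling_tendsto.sub h2
    rw [sub_zero] at this
    exact this
  have := hmono.ge_of_tendsto hlim m
  simp only [he] at this
  linarith

private lemma robbins_upper (n : ℕ) :
    Real.log (stirlingSeq (n+1)) < Real.log (√π) + 1/(12*((n:ℝ)+1)) := by
  have h1 := robbins_diff_lt n
  have h2 := robbins_upper_tail (n+1)
  push_cast at h2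
  ring_nf at h1 h2 ⊢
  linarith

private lemma robbins_lower' (n : ℕ) (hn : 1 ≤ n) :
    Real.log (√π) < Real.log (stirlingSeq n) := by
  cases n with
  | zero => omega
  | succ m => exact robbins_lower m

private lemma robbins_upper' (n : ℕ) (hn : 1 ≤ n) :
    Real.log (stirlingSeq n) < Real.log (√π) + 1/(12*(n:ℝ)) := by
  cases n with
  | zero => omega
  | succ m =>
    have := robbins_upper m
    push_cast
    exact this

theorem stmt_6 (n : ℕ) (hn : 1 ≤ n) :
    ((n : ℝ) + 1 / 2) * Real.log n - n + (1 / 2) * Real.log (2 * Real.pi) <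
        Real.log (n ! : ℝ) ∧
      Real.log (n ! : ℝ) <
        ((n : ℝ) + 1 / 2) * Real.log n - n + (1 / 2) * Real.log (2 * Real.pi) + 1 / 12 := by
  have hNpos : (0:ℝ) < (n:ℝ) := by exact_mod_cast hn
  have hform := Stirling.log_stirlingSeq_formula n
  rw [Real.log_mul two_ne_zero hNpos.ne', Real.log_div hNpos.ne' (Real.exp_ne_zero 1),
    Real.log_exp] at hform
  have hsqrt : Real.log (√π) = (1/2) * Real.log π := by
    rw [Real.log_sqrt Real.pi_pos.le]; ring
  have hlog2pi : Real.log (2 * π) = Real.log 2 + Real.log π :=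
    Real.log_mul (by norm_num) Real.pi_ne_zero
  have hlo := robbins_lower' n hn
  rw [hsqrt] at hlo
  have hhi := robbins_upper' n hn
  rw [hsqrt] at hhi
  have h12 : 1/(12*(n:ℝ)) ≤ 1/12 := by
    rw [div_le_div_iff₀ (by positivity) (by norm_num)]
    have : (1:ℝ) ≤ (n:ℝ) := by exact_mod_cast hn
    nlinarith
  rw [hlog2pi]
  constructor <;> linarith [hform, hlo, hhi, h12]
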